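/- Let t,k ≥ 3 and let G be a (K_t, T_k)-co-critical graph with critical coloring τ. Then every connected component D of the blue graph G_b satisfies |D| ≤ k−1 and G[V(D)] is a complete graph on |D| vertices. -/

import Mathlib

/-- A red/blue edge-coloring of `G`, given by its red subgraph `R ≤ G`, is a
critical coloring if the red graph is `K_t`-free and every component of the
blue graph `G \ R` has fewer than `k` vertices. -/
def IsCriticalColoring {V : Type*} (G R : SimpleGraph V) (t k : ℕ) : Prop :=
  R ≤ G ∧ (∀ S : Finset V, ¬ R.IsNClique t S) ∧
    ∀ c : (G \ R).ConnectedComponent, c.supp.ncard < k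

/-- `G` is `(K_t, 𝒯_k)`-co-critical. -/
def CoCritical {V : Type*} (G : SimpleGraph V) (t k : ℕ) : Prop :=
  G ≠ ⊤ ∧ (∃ R, IsCriticalColoring G R t k) ∧
    ∀ u v : V, u ≠ v → ¬ G.Adj u v →
      ∀ R, ¬ IsCriticalColoring (G ⊔ SimpleGraph.fromEdgeSet {s(u, v)}) R t k

/-- every component `D` of the blue graph of a critical coloring of a
`(K_t, 𝒯_k)`-co-critical graph satisfies `|D| ≤ k-1`, and `G` induces a complete
graph on `V(D)`. -/
theorem stmt_4 {V : Type*} [Fintype V] (t k : ℕ) (ht : 3 ≤ t) (hk : 3 ≤ k)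
    (G : SimpleGraph V) (hG : CoCritical G t k)
    (R : SimpleGraph V) (hR : IsCriticalColoring G R t k) :
    ∀ D : (G \ R).ConnectedComponent,
      D.supp.ncard ≤ k - 1 ∧
      ∀ u ∈ D.supp, ∀ v ∈ D.supp, u ≠ v → G.Adj u v := by
  intro D
  refine ⟨by have := hR.2.2 D; omega, ?_⟩
  intro u hu v hv huv
  by_contra hadj
  apply hG.2.2 u v huv hadj R
  set G' := G ⊔ SimpleGraph.fromEdgeSet {s(u, v)} with hG'
  have hRG : R ≤ G := hR.1
  -- u and v are reachable in G \ R
  have hreach : (G \ R).Reachable u v := by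
    rw [SimpleGraph.ConnectedComponent.mem_supp_iff] at hu hv
    exact (SimpleGraph.ConnectedComponent.eq).mp (hu.trans hv.symm)
  -- reachability in G' \ R is the same as in G \ R
  have key : ∀ a b : V, (G' \ R).Reachable a b ↔ (G \ R).Reachable a b := by
    intro a b
    constructor
    · intro h
      rw [SimpleGraph.reachable_iff_reflTransGen] at h ⊢
      have step : ∀ x y : V, (G' \ R).Adj x y →
          Relation.ReflTransGen (G \ R).Adj x y := by
        intro x y hxy
        rw [SimpleGraph.sdiff_adj] at hxy
        obtain ⟨hxy1, hxy2⟩ := hxy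
        rcases hxy1 with h1 | h1
        · exact Relation.ReflTransGen.single (by rw [SimpleGraph.sdiff_adj]; exact ⟨h1, hxy2⟩)
        · simp only [SimpleGraph.fromEdgeSet_adj, Set.mem_singleton_iff,
            Sym2.eq, Sym2.rel_iff', Prod.mk.injEq, Prod.swap_prod_mk] at h1
          rcases h1.1 with ⟨rfl, rfl⟩ | ⟨rfl, rfl⟩
          · exact (SimpleGraph.reachable_iff_reflTransGen _ _).mp hreach
          · exact (SimpleGraph.reachable_iff_reflTransGen _ _).mp hreach.symm
      have := Relation.ReflTransGen.mono step _ _ h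
      rwa [Relation.reflTransGen_idem] at this
    · intro h
      exact h.mono (fun x y hxy => by
        rw [SimpleGraph.sdiff_adj] at hxy ⊢
        exact ⟨Or.inl hxy.1, hxy.2⟩)
  refine ⟨le_trans hRG le_sup_left, hR.2.1, ?_⟩
  intro c
  induction c using SimpleGraph.ConnectedComponent.ind with
  | _ w =>
    have hsupp : ((G' \ R).connectedComponentMk w).supp
        = ((G \ R).connectedComponentMk w).supp := by
      ext x
      simp only [SimpleGraph.ConnectedComponent.mem_supp_iff,
        SimpleGraph.ConnectedComponent.eq]
      exact key x w
    rw [hsupp]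
    exact hR.2.2 _
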